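/- (Coefficientwise formulation of Proposition 1.2 of the paper.) For every integer n ≥ 1, every m with 1 ≤ m ≤ n, every m-element subset I of {1,…,n}, and all non-negative integers f_1,…,f_m, the identity L_n^{p^{f_m}} · [f_1,…,f_{m−1}, f_m + n]_I = Σ_{s=0}^{n−1} (−1)^{n+s−1} · [f_1,…,f_{m−1}, f_m + s]_I · L_{n,s}^{p^{f_m}} holds in R = 𝔽_p[y_1,…,y_n]. Here the brackets on subsets I are m×m determinants in the variables y_i with i ∈ I, while L_n and L_{n,s} involve all n variables. (Comparing coefficients of the exterior monomials x_I, this family of identities, taken over all subsets I of size m = n−k, is equivalent to Proposition 1.2 for the Mùi brackets [k; e_{k+1},…,e_n].) -/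

import Mathlib

/-- The bracket `[e_1,…,e_m]_I`: the determinant `det (y_{ι a} ^ (p ^ e b))` in
`𝔽_p[y_1,…,y_n]`, where `ι : Fin m → Fin n` enumerates the subset `I`. -/
noncomputable def bracket (p n m : ℕ) (e : Fin m → ℕ) (ι : Fin m → Fin n) :
    MvPolynomial (Fin n) (ZMod p) :=
  Matrix.det (Matrix.of fun a b : Fin m =>
    (MvPolynomial.X (ι a) : MvPolynomial (Fin n) (ZMod p)) ^ p ^ e b)

/-- `Lpoly p n s = L_{n,s} = [0,1,…,ŝ,…,n]` (for `s < n`); `Lpoly p n n = L_n = [0,…,n-1]`. -/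
noncomputable def Lpoly (p n s : ℕ) : MvPolynomial (Fin n) (ZMod p) :=
  bracket p n n (fun j => if (j : ℕ) < s then (j : ℕ) else (j : ℕ) + 1) id


section Aux
open Matrix MvPolynomial Finset

lemma succAbove_val {n : ℕ} (s : Fin (n+1)) (b : Fin n) :
    ((s.succAbove b : Fin (n+1)) : ℕ) = if (b : ℕ) < (s : ℕ) then (b : ℕ) else (b : ℕ) + 1 := by
  rw [Fin.succAbove]
  by_cases h : b.castSucc < s
  · have h' : (b : ℕ) < (s : ℕ) := by simpa [Fin.lt_def] using h
    simp [h, h']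
  · have h' : ¬ (b : ℕ) < (s : ℕ) := by simpa [Fin.lt_def] using h
    simp [h, h']

lemma key (p n' : ℕ) (i : Fin (n' + 1)) :
    (X i : MvPolynomial (Fin (n' + 1)) (ZMod p)) ^ p ^ (n' + 1) * Lpoly p (n' + 1) (n' + 1)
      = ∑ s ∈ Finset.range (n' + 1),
          (-1 : MvPolynomial (Fin (n' + 1)) (ZMod p)) ^ ((n' + 1) + s + 1)
          * (X i) ^ p ^ s * Lpoly p (n' + 1) s := by
  classical
  set R := MvPolynomial (Fin (n' + 1)) (ZMod p) with hR
  set r : Fin (n' + 1 + 1) → R :=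
    fun a => if h : (a : ℕ) < n' + 1 then X ⟨a, h⟩ else X i with hr
  set N : Matrix (Fin (n' + 1 + 1)) (Fin (n' + 1 + 1)) R :=
    Matrix.of (fun a b => (r a) ^ p ^ (b : ℕ)) with hN
  have hrow : ∀ a : Fin (n' + 1), r a.castSucc = X a := by
    intro a
    simp only [hr, Fin.coe_castSucc, a.isLt, dif_pos, Fin.eta]
  have hlast : r (Fin.last (n' + 1)) = X i := by
    simp [hr]
  have hdet : N.det = 0 := by
    apply det_zero_of_row_eq (i := i.castSucc) (j := Fin.last (n' + 1))
      (Fin.ne_of_lt (Fin.castSucc_lt_last i))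
    funext b
    simp only [hN, of_apply, hrow, hlast]
  have hsub : ∀ j : Fin (n' + 1 + 1),
      det (N.submatrix Fin.castSucc j.succAbove) = Lpoly p (n' + 1) (j : ℕ) := by
    intro j
    unfold Lpoly bracket
    congr 1
    ext a b
    simp only [submatrix_apply, hN, of_apply, hrow, succAbove_val, id_eq]
  have hexp := det_succ_row N (Fin.last (n' + 1))
  rw [hdet] at hexp
  simp only [Fin.succAbove_last, hsub] at hexp
  simp only [Fin.succAbove_last, hN, of_apply, hlast, hsub, Fin.val_last] at hexp
  rw [Fin.sum_univ_castSucc] at hexp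
  simp only [Fin.coe_castSucc, Fin.val_last] at hexp
  have heven : ((-1 : R)) ^ ((n' + 1) + (n' + 1)) = 1 :=
    Even.neg_one_pow ⟨n' + 1, rfl⟩
  rw [heven, one_mul] at hexp
  have key' : (X i : R) ^ p ^ (n' + 1) * Lpoly p (n' + 1) (n' + 1)
      = ∑ j : Fin (n' + 1), (-1 : R) ^ ((n' + 1) + (j:ℕ) + 1) * (X i) ^ p ^ (j:ℕ)
          * Lpoly p (n' + 1) (j:ℕ) := by
    have h2 := eq_neg_of_add_eq_zero_right hexp.symm
    rw [← Finset.sum_neg_distrib] at h2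
    rw [h2]
    refine Finset.sum_congr rfl fun j _ => ?_
    rw [pow_succ]
    ring
  rw [key', Fin.sum_univ_eq_sum_range
    fun s => (-1 : R) ^ ((n' + 1) + s + 1) * (X i) ^ p ^ s * Lpoly p (n' + 1) s]

lemma key2 (p : ℕ) (hp : p.Prime) (hodd : Odd p) (n' f0 : ℕ) (i : Fin (n' + 1)) :
    (X i : MvPolynomial (Fin (n' + 1)) (ZMod p)) ^ p ^ (n' + 1 + f0)
        * Lpoly p (n' + 1) (n' + 1) ^ p ^ f0
      = ∑ s ∈ Finset.range (n' + 1),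
          (-1 : MvPolynomial (Fin (n' + 1)) (ZMod p)) ^ ((n' + 1) + s + 1)
          * (X i) ^ p ^ (s + f0) * (Lpoly p (n' + 1) s) ^ p ^ f0 := by
  haveI : Fact p.Prime := ⟨hp⟩
  set R := MvPolynomial (Fin (n' + 1)) (ZMod p) with hR
  have h := congrArg (· ^ p ^ f0) (key p n' i)
  simp only [mul_pow, ← pow_mul, ← pow_add] at h
  rw [sum_pow_char_pow] at h
  have hL : (X i : R) ^ (p ^ (n' + 1) * p ^ f0) = X i ^ p ^ (n' + 1 + f0) := by
    rw [← pow_add]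
  calc (X i : R) ^ p ^ (n' + 1 + f0) * Lpoly p (n' + 1) (n' + 1) ^ p ^ f0
      = (X i ^ p ^ (n' + 1) * Lpoly p (n' + 1) (n' + 1)) ^ p ^ f0 := by
        rw [mul_pow, ← pow_mul, ← pow_add]
    _ = ∑ s ∈ Finset.range (n' + 1),
          ((-1 : R) ^ ((n' + 1) + s + 1) * (X i) ^ p ^ s * Lpoly p (n' + 1) s) ^ p ^ f0 := by
        rw [key p n' i, sum_pow_char_pow]
    _ = _ := by
        refine Finset.sum_congr rfl fun s _ => ?_
        rw [mul_pow, mul_pow, ← pow_mul, ← pow_mul, ← pow_add]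
        congr 1
        congr 1
        rcases Nat.even_or_odd ((n' + 1) + s + 1) with he | ho
        · rw [he.neg_one_pow, (he.mul_right _).neg_one_pow]
        · rw [ho.neg_one_pow, (ho.mul (hodd.pow)).neg_one_pow]

lemma det_updateColumn_finset_sum {R : Type*} [CommRing R] {m : ℕ}
    (A : Matrix (Fin m) (Fin m) R) (j : Fin m) {ι : Type*} (S : Finset ι)
    (v : ι → Fin m → R) :
    Matrix.det (A.updateCol j (fun a => ∑ s ∈ S, v s a))
      = ∑ s ∈ S, Matrix.det (A.updateCol j (v s)) := by
  classical
  induction S using Finset.induction_on with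
  | empty =>
      simp only [Finset.sum_empty]
      have : (fun _ : Fin m => (0 : R)) = (0 : R) • (fun _ : Fin m => (0 : R)) := by
        funext a; simp
      rw [this, det_updateCol_smul, zero_mul]
  | insert a S' hs ih =>
      simp only [Finset.sum_insert hs]
      rw [show (fun x => v a x + ∑ s ∈ S', v s x)
            = (fun x => v a x) + (fun x => ∑ s ∈ S', v s x) from rfl,
        det_updateCol_add, ih]

lemma main_aux (p : ℕ) (hp : p.Prime) (hodd : Odd p) (n' m : ℕ) (j : Fin m)
    (ι : Fin m → Fin (n' + 1)) (f : Fin m → ℕ) :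
    Lpoly p (n' + 1) (n' + 1) ^ p ^ f j *
        bracket p (n' + 1) m (Function.update f j (f j + (n' + 1))) ι =
      ∑ s ∈ Finset.range (n' + 1),
        (-1 : MvPolynomial (Fin (n' + 1)) (ZMod p)) ^ ((n' + 1) + s + 1) *
          bracket p (n' + 1) m (Function.update f j (f j + s)) ι *
          Lpoly p (n' + 1) s ^ p ^ f j := by
  classical
  set R := MvPolynomial (Fin (n' + 1)) (ZMod p) with hR
  set f0 := f j with hf0
  set M : Matrix (Fin m) (Fin m) R := Matrix.of (fun a b =>
    (X (ι a) : R) ^ p ^ (Function.update f j (f0 + (n' + 1)) b)) with hM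
  set L : R := Lpoly p (n' + 1) (n' + 1) with hL
  set u : Fin m → R := fun a => (X (ι a) : R) ^ p ^ ((n' + 1) + f0) with hu
  have h1 : M.updateCol j u = M := by
    have : u = fun a => M a j := by
      funext a
      simp only [hu, hM, of_apply, Function.update_self, add_comm]
    rw [this, updateCol_eq_self]
  have h2 : L ^ p ^ f0 * M.det = (M.updateCol j ((L ^ p ^ f0) • u)).det := by
    rw [det_updateCol_smul, h1]
  have h3 : (L ^ p ^ f0) • u = fun a => ∑ s ∈ Finset.range (n' + 1),
      (((-1 : R) ^ ((n' + 1) + s + 1) * Lpoly p (n' + 1) s ^ p ^ f0)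
        * (X (ι a) : R) ^ p ^ (s + f0)) := by
    funext a
    simp only [Pi.smul_apply, smul_eq_mul, hu]
    rw [mul_comm, key2 p hp hodd n' f0 (ι a)]
    exact Finset.sum_congr rfl fun s _ => by ring
  have h4 : ∀ s : ℕ, M.updateCol j
      (fun a => (X (ι a) : R) ^ p ^ (s + f0))
        = Matrix.of (fun a b => (X (ι a) : R) ^ p ^ (Function.update f j (f0 + s) b)) := by
    intro s
    ext a b
    by_cases hb : b = j
    · subst hb
      simp [Function.update_self, add_comm]
    · simp [Matrix.updateCol_apply, hb, hM, Function.update_of_ne hb]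
  have main : L ^ p ^ f0 * M.det = ∑ s ∈ Finset.range (n' + 1),
      (-1 : R) ^ ((n' + 1) + s + 1) *
        bracket p (n' + 1) m (Function.update f j (f0 + s)) ι *
          Lpoly p (n' + 1) s ^ p ^ f0 := by
    rw [h2, h3, det_updateColumn_finset_sum]
    refine Finset.sum_congr rfl fun s _ => ?_
    have : (fun a => ((-1 : R) ^ ((n' + 1) + s + 1) * Lpoly p (n' + 1) s ^ p ^ f0)
          * (X (ι a) : R) ^ p ^ (s + f0))
        = ((-1 : R) ^ ((n' + 1) + s + 1) * Lpoly p (n' + 1) s ^ p ^ f0)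
          • (fun a => (X (ι a) : R) ^ p ^ (s + f0)) := rfl
    rw [this, det_updateCol_smul, h4 s]
    unfold bracket
    ring
  exact main

end Aux

/-- Coefficientwise formulation of Proposition 1.2: for every `m`-element subset `I`
of `{1,…,n}` (given as a `Finset` of cardinality `m`, enumerated in increasing order
by `Finset.orderIsoOfFin`) and all non-negative integers `f_1,…,f_m`,
`L_n^{p^{f_m}} · [f_1,…,f_{m−1}, f_m + n]_I
  = Σ_{s=0}^{n−1} (−1)^{n+s−1} · [f_1,…,f_{m−1}, f_m + s]_I · L_{n,s}^{p^{f_m}}`. -/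
theorem statement3 (p : ℕ) (hp : p.Prime) (hodd : Odd p) (n m : ℕ) (hn : 1 ≤ n)
    (hm : 1 ≤ m) (hmn : m ≤ n) (I : Finset (Fin n)) (hI : I.card = m)
    (f : Fin m → ℕ) :
    Lpoly p n n ^ p ^ f ⟨m - 1, by omega⟩ *
        bracket p n m (Function.update f ⟨m - 1, by omega⟩ (f ⟨m - 1, by omega⟩ + n))
          (fun b => ((I.orderIsoOfFin hI) b : Fin n)) =
      ∑ s ∈ Finset.range n,
        (-1 : MvPolynomial (Fin n) (ZMod p)) ^ (n + s - 1) *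
          bracket p n m (Function.update f ⟨m - 1, by omega⟩ (f ⟨m - 1, by omega⟩ + s))
            (fun b => ((I.orderIsoOfFin hI) b : Fin n)) *
          Lpoly p n s ^ p ^ f ⟨m - 1, by omega⟩ := by
  obtain ⟨n', rfl⟩ : ∃ n', n = n' + 1 := ⟨n - 1, by omega⟩
  refine Eq.trans (main_aux p hp hodd n' m ⟨m - 1, by omega⟩
    (fun b => ((I.orderIsoOfFin hI) b : Fin (n' + 1))) f) ?_
  refine Finset.sum_congr rfl fun s hs => ?_
  have hsign : (-1 : MvPolynomial (Fin (n' + 1)) (ZMod p)) ^ ((n' + 1) + s + 1)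
      = (-1 : MvPolynomial (Fin (n' + 1)) (ZMod p)) ^ ((n' + 1) + s - 1) := by
    have h : (n' + 1) + s + 1 = ((n' + 1) + s - 1) + 2 := by omega
    rw [h, pow_add]
    simp
  rw [hsign]
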